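/- If certified box (I×J,κ) with κ ≤ 1/2 is converted to the edge e_{I,J'} where J' is obtained from J by removing the initial ⌊κ·μ(I)⌋ and final ⌊κ·μ(I)⌋ elements (μ(I) = μ(J)), then 3κ·μ(I) ≥ d_edit(x_I, y_{J'}), i.e., the new edge is also certified. -/

import Mathlib

open List

/-- Cost structure for Levenshtein distance (as in the removed Mathlib file
`Mathlib/Data/List/EditDistance/Defs.lean`). -/
structure Levenshtein.Cost (α β δ : Type*) where
  delete : α → δ
  insert : β → δ
  substitute : α → β → δ

/-- Unit costs (as in the removed Mathlib definition). -/
def Levenshtein.defaultCost {α : Type*} [DecidableEq α] : Levenshtein.Cost α α ℕ where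
  delete _ := 1
  insert _ := 1
  substitute a b := if a = b then 0 else 1

/-- Levenshtein distance, by the recursion that characterized the removed Mathlib definition. -/
def levenshtein {α β δ : Type*} [AddZeroClass δ] [Min δ] (C : Levenshtein.Cost α β δ) :
    List α → List β → δ
  | [], [] => 0
  | [], y :: ys => C.insert y + levenshtein C [] ys
  | x :: xs, [] => C.delete x + levenshtein C xs []
  | x :: xs, y :: ys =>
    min (C.delete x + levenshtein C xs (y :: ys))
      (min (C.insert y + levenshtein C (x :: xs) ys) (C.substitute x y + levenshtein C xs ys))

section levaux
variable {α β δ : Type*} [AddZeroClass δ] [Min δ] (C : Levenshtein.Cost α β δ)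

@[simp] lemma levenshtein_nil_nil : levenshtein C [] [] = 0 := by simp [levenshtein]

@[simp] lemma levenshtein_nil_cons (y : β) (ys : List β) :
    levenshtein C [] (y :: ys) = C.insert y + levenshtein C [] ys := by simp [levenshtein]

@[simp] lemma levenshtein_cons_nil (x : α) (xs : List α) :
    levenshtein C (x :: xs) [] = C.delete x + levenshtein C xs [] := by simp [levenshtein]

lemma levenshtein_cons_cons (x : α) (xs : List α) (y : β) (ys : List β) :
    levenshtein C (x :: xs) (y :: ys) =
      min (C.delete x + levenshtein C xs (y :: ys))
        (min (C.insert y + levenshtein C (x :: xs) ys) (C.substitute x y + levenshtein C xs ys)) := by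
  simp [levenshtein]

end levaux

@[simp] lemma Levenshtein.defaultCost_delete {α : Type*} [DecidableEq α] (a : α) :
    (Levenshtein.defaultCost : Levenshtein.Cost α α ℕ).delete a = 1 := rfl

@[simp] lemma Levenshtein.defaultCost_insert {α : Type*} [DecidableEq α] (a : α) :
    (Levenshtein.defaultCost : Levenshtein.Cost α α ℕ).insert a = 1 := rfl

@[simp] lemma Levenshtein.defaultCost_substitute {α : Type*} [DecidableEq α] (a b : α) :
    (Levenshtein.defaultCost : Levenshtein.Cost α α ℕ).substitute a b = if a = b then 0 else 1 :=
  rfl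

/-- Edit distance between two lists (Levenshtein distance with unit costs). -/
def edist {α : Type*} [DecidableEq α] (x y : List α) : ℕ :=
  levenshtein Levenshtein.defaultCost x y

/-- The substring of `x` indexed by the interval `I = {I.1, ..., I.2}` minus its minimum,
i.e. the characters `x_{I.1+1}, ..., x_{I.2}` (1-indexed). -/
def sub {α : Type*} (x : List α) (I : ℕ × ℕ) : List α :=
  (x.drop I.1).take (I.2 - I.1)

section aux
variable {α : Type*} [DecidableEq α]

lemma edist_nil (l : List α) : edist [] l = l.length := by
  induction l with
  | nil => simp [_root_.edist, levenshtein_nil_nil]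
  | cons y ys ih =>
    simp [_root_.edist] at ih ⊢
    omega

lemma edist_delete (x : α) (xs ys : List α) :
    edist (x :: xs) ys ≤ 1 + edist xs ys := by
  cases ys with
  | nil =>
    simp [_root_.edist, levenshtein_cons_nil, Levenshtein.defaultCost]
  | cons y ys =>
    simp only [_root_.edist, levenshtein_cons_cons]
    have : Levenshtein.defaultCost.delete x = 1 := rfl
    calc _ ≤ Levenshtein.defaultCost.delete x +
        levenshtein Levenshtein.defaultCost xs (y :: ys) := min_le_left _ _
      _ = 1 + levenshtein Levenshtein.defaultCost xs (y :: ys) := by rw [this]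

lemma edist_le_cons (a : List α) (y : α) (ys : List α) :
    edist a ys ≤ edist a (y :: ys) + 1 := by
  induction a with
  | nil =>
    rw [edist_nil, edist_nil]
    simp; omega
  | cons x xs ih =>
    have hdel := edist_delete x xs ys
    simp only [_root_.edist] at *
    rw [levenshtein_cons_cons]
    have hins : levenshtein Levenshtein.defaultCost (x :: xs) ys ≤
        Levenshtein.defaultCost.insert y +
          levenshtein Levenshtein.defaultCost (x :: xs) ys + 1 := by
      have : Levenshtein.defaultCost.insert y = 1 := rfl
      omega
    have hsub : levenshtein Levenshtein.defaultCost (x :: xs) ys ≤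
        Levenshtein.defaultCost.substitute x y +
          levenshtein Levenshtein.defaultCost xs ys + 1 := by
      have h1 : levenshtein Levenshtein.defaultCost (x :: xs) ys ≤
          1 + levenshtein Levenshtein.defaultCost xs ys := hdel
      omega
    have hd : levenshtein Levenshtein.defaultCost (x :: xs) ys ≤
        Levenshtein.defaultCost.delete x +
          levenshtein Levenshtein.defaultCost xs (y :: ys) + 1 := by
      have hD : Levenshtein.defaultCost.delete x = 1 := rfl
      omega
    omega

lemma edist_sublist {b c : List α} (h : b <+ c) :
    ∀ a : List α, edist a b ≤ edist a c + (c.length - b.length) := by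
  induction h with
  | slnil => intro a; simp
  | cons y h ih =>
    rename_i b' c' -- b' <+ c', goal about y :: c'
    intro a
    have h1 := ih a
    have h2 := edist_le_cons a y c'
    have h3 : b'.length ≤ c'.length := h.length_le
    simp only [List.length_cons]
    omega
  | cons_cons z h ih =>
    rename_i b' c'
    intro a
    have hlen : b'.length ≤ c'.length := h.length_le
    induction a with
    | nil =>
      rw [edist_nil, edist_nil]
      simp; omega
    | cons x xs iha =>
      have h1 : edist xs (z :: b') ≤ edist xs (z :: c') + (c'.length - b'.length) := by
        have := iha
        simp only [List.length_cons] at this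
        omega
      have h2 := ih (x :: xs)
      have h3 := ih xs
      simp only [_root_.edist] at *
      rw [levenshtein_cons_cons, levenshtein_cons_cons]
      simp only [List.length_cons]
      omega

end aux

/-- shrinking the vertical interval of a certified box (I×J, κ), κ ≤ 1/2,
by ℓ = ⌊κ·μ(I)⌋ at both ends and tripling the bound yields a certified edge:
d_edit(x_I, y_{J'}) ≤ 3κ·μ(I). -/
theorem stmt15 {α : Type*} [DecidableEq α] (x y : List α) (I J : ℕ × ℕ) (κ : ℚ)
    (hI : I.1 < I.2) (hJ : J.1 ≤ J.2) (hμ : I.2 - I.1 = J.2 - J.1)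
    (hκ : κ ≤ 1 / 2)
    (hcert : (edist (sub x I) (sub y J) : ℚ) ≤ κ * ((I.2 : ℚ) - (I.1 : ℚ))) :
    (edist (sub x I) (sub y (J.1 + ⌊κ * ((I.2 : ℚ) - (I.1 : ℚ))⌋₊,
        J.2 - ⌊κ * ((I.2 : ℚ) - (I.1 : ℚ))⌋₊)) : ℚ) ≤
      3 * κ * ((I.2 : ℚ) - (I.1 : ℚ)) := by
  set ℓ : ℕ := ⌊κ * ((I.2 : ℚ) - (I.1 : ℚ))⌋₊ with hℓ
  set a := sub x I
  set c := sub y J with hc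
  set b := sub y (J.1 + ℓ, J.2 - ℓ) with hb
  -- b as drop/take of c
  have hbc : b = ((c.drop ℓ).take (J.2 - J.1 - 2 * ℓ)) := by
    rw [hb, hc]
    simp only [sub, List.drop_take, List.drop_drop, List.take_take]
    congr 1 <;> omega
  have hsub : b <+ c := by
    rw [hbc]
    exact (List.take_sublist _ _).trans (List.drop_sublist _ _)
  -- length bound
  have hclen : c.length = min (J.2 - J.1) (y.length - J.1) := by
    rw [hc]; simp [sub]
  have hblen : b.length = min ((J.2 - ℓ) - (J.1 + ℓ)) (y.length - (J.1 + ℓ)) := by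
    rw [hb]; simp [sub]
  have hdiff : c.length - b.length ≤ 2 * ℓ := by omega
  have key := edist_sublist hsub a
  -- rational arithmetic
  have h0 : (0 : ℚ) ≤ κ * ((I.2 : ℚ) - (I.1 : ℚ)) :=
    le_trans (Nat.cast_nonneg _) hcert
  have hfloor : (ℓ : ℚ) ≤ κ * ((I.2 : ℚ) - (I.1 : ℚ)) := by
    rw [hℓ]; exact Nat.floor_le h0
  have hkey : (edist a b : ℚ) ≤ (edist a c : ℚ) + 2 * ℓ := by
    have : (edist a b : ℚ) ≤ (edist a c : ℚ) + ((c.length - b.length : ℕ) : ℚ) := by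
      exact_mod_cast key
    have h2 : ((c.length - b.length : ℕ) : ℚ) ≤ 2 * ℓ := by exact_mod_cast hdiff
    linarith
  calc (edist a b : ℚ) ≤ (edist a c : ℚ) + 2 * ℓ := hkey
    _ ≤ κ * ((I.2 : ℚ) - (I.1 : ℚ)) + 2 * (κ * ((I.2 : ℚ) - (I.1 : ℚ))) := by linarith
    _ = 3 * κ * ((I.2 : ℚ) - (I.1 : ℚ)) := by ring
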